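/- Define Φ : ℝ² → ℝ² by Φ(x,y) = (|x| + y, 2x + |y|). Then Φ is a bijection from ℝ² to ℝ². -/

import Mathlib

/-- Explicit piecewise-linear inverse of `Φ(x,y) = (|x|+y, 2x+|y|)`. -/
noncomputable def phiInv (q : ℝ × ℝ) : ℝ × ℝ :=
  if q.1 ≤ q.2 ∧ q.2 ≤ 2 * q.1 then (q.2 - q.1, 2 * q.1 - q.2)
  else if 0 ≤ q.1 + q.2 ∧ 2 * q.1 ≤ q.2 then ((q.1 + q.2) / 3, (2 * q.1 - q.2) / 3)
  else if q.2 ≤ q.1 ∧ 0 ≤ 2 * q.1 + q.2 then ((q.2 - q.1) / 3, (2 * q.1 + q.2) / 3)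
  else (q.1 + q.2, 2 * q.1 + q.2)

/-- The map `Φ(x,y) = (|x| + y, 2x + |y|)` is a bijection of `ℝ²`. -/
theorem phi_bijective :
    Function.Bijective (fun p : ℝ × ℝ => (|p.1| + p.2, 2 * p.1 + |p.2|)) := by
  rw [Function.bijective_iff_has_inverse]
  refine ⟨phiInv, ?_, ?_⟩
  · -- left inverse
    rintro ⟨x, y⟩
    simp only [phiInv]
    rcases le_total 0 x with hx | hx <;> rcases le_total 0 y with hy | hy <;>
      [rw [abs_of_nonneg hx, abs_of_nonneg hy];
       rw [abs_of_nonneg hx, abs_of_nonpos hy];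
       rw [abs_of_nonpos hx, abs_of_nonneg hy];
       rw [abs_of_nonpos hx, abs_of_nonpos hy]] <;>
      split_ifs with h1 h2 h3 <;>
      simp (failIfUnchanged := false) only [not_and_or, not_le] at * <;>
      casesm* _ ∨ _, _ ∧ _ <;>
      refine Prod.ext ?_ ?_ <;> simp only [] <;> linarith
  · -- right inverse
    rintro ⟨u, v⟩
    simp only [phiInv]
    split_ifs with h1 h2 h3
    · obtain ⟨ha, hb⟩ := h1
      show (|v - u| + (2 * u - v), 2 * (v - u) + |2 * u - v|) = (u, v)
      rw [abs_of_nonneg (by linarith), abs_of_nonneg (by linarith)]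
      refine Prod.ext ?_ ?_ <;> simp only [] <;> ring
    · obtain ⟨ha, hb⟩ := h2
      show (|(u + v) / 3| + (2 * u - v) / 3, 2 * ((u + v) / 3) + |(2 * u - v) / 3|) = (u, v)
      rw [abs_of_nonneg (by linarith), abs_of_nonpos (by linarith)]
      refine Prod.ext ?_ ?_ <;> simp only [] <;> ring
    · obtain ⟨ha, hb⟩ := h3
      show (|(v - u) / 3| + (2 * u + v) / 3, 2 * ((v - u) / 3) + |(2 * u + v) / 3|) = (u, v)
      rw [abs_of_nonpos (by linarith), abs_of_nonneg (by linarith)]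
      refine Prod.ext ?_ ?_ <;> simp only [] <;> ring
    · have hx : u + v ≤ 0 := by
        by_contra hc
        push_neg at hc
        have hv : v < 2 * u := by
          by_contra hv
          push_neg at hv
          exact h2 ⟨by linarith, hv⟩
        have huv : ¬ (u ≤ v) := fun h => h1 ⟨h, by linarith⟩
        push_neg at huv
        exact h3 ⟨by linarith, by linarith⟩
      have hy : 2 * u + v ≤ 0 := by
        by_contra hc
        push_neg at hc
        have hvu : u < v := by
          by_contra h
          push_neg at h
          exact h3 ⟨h, by linarith⟩
        linarith
      show (|u + v| + (2 * u + v), 2 * (u + v) + |2 * u + v|) = (u, v)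
      rw [abs_of_nonpos hx, abs_of_nonpos hy]
      refine Prod.ext ?_ ?_ <;> simp only [] <;> ring
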